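/- arXiv:0903.0761 — 3 statements merged into one kernel-verified Lean document; each statement's English description precedes it below -/
import Mathlib

section
/- Let 0 → A →g B →f C → 0 be a non-split short exact sequence in mod Λ. If g is left minimal, then Ext_Λ^1(C', A) ≠ 0 for every non-zero direct summand C' of C. -/
open CategoryTheory CategoryTheory.Limits

section Preamble

variable {Λ : Type} [Ring Λ]

/-- `f : P ⟶ M` is a projective cover: `P` is projective, `f` is a surjective
essential epimorphism. -/
def IsProjCover {P M : ModuleCat.{0} Λ} (f : P ⟶ M) : Prop :=
  Projective P ∧ Function.Surjective f ∧
    ∀ Q : Submodule Λ P, Submodule.map f.hom Q = ⊤ → Q = ⊤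

/-- `f : M ⟶ I` is an injective envelope: `I` is injective, `f` is an injective
essential extension. -/
def IsInjEnv {M I : ModuleCat.{0} Λ} (f : M ⟶ I) : Prop :=
  Injective I ∧ Function.Injective f ∧
    ∀ Q : Submodule Λ I, Q ≠ ⊥ → Q ⊓ LinearMap.range f.hom ≠ ⊥

/-- `IsSyzygy n K M` : `K` is an `n`-th syzygy `Ω^n M` of `M`, computed with
minimal projective resolutions (i.e. iterated kernels of projective covers). -/
inductive IsSyzygy : ℕ → ModuleCat.{0} Λ → ModuleCat.{0} Λ → Prop
  | zero (M : ModuleCat.{0} Λ) : IsSyzygy 0 M M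
  | succ {n : ℕ} {K K₁ M P : ModuleCat.{0} Λ} (f : P ⟶ M) (i : K₁ ⟶ P) :
      IsProjCover f → Function.Injective i →
      LinearMap.range i.hom = LinearMap.ker f.hom →
      IsSyzygy n K K₁ → IsSyzygy (n + 1) K M

/-- `IsCosyzygy n C M` : `C` is an `n`-th cosyzygy `Ω^{-n} M` of `M`, computed with
minimal injective resolutions (i.e. iterated cokernels of injective envelopes). -/
inductive IsCosyzygy : ℕ → ModuleCat.{0} Λ → ModuleCat.{0} Λ → Prop
  | zero (M : ModuleCat.{0} Λ) : IsCosyzygy 0 M M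
  | succ {n : ℕ} {C C₁ M I : ModuleCat.{0} Λ} (f : M ⟶ I) (p : I ⟶ C₁) :
      IsInjEnv f → Function.Surjective p →
      LinearMap.ker p.hom = LinearMap.range f.hom →
      IsCosyzygy n C C₁ → IsCosyzygy (n + 1) C M

/-- projective dimension ≤ n : the n-th minimal syzygy is projective. -/
def PdLE (M : ModuleCat.{0} Λ) (n : ℕ) : Prop :=
  ∃ K : ModuleCat.{0} Λ, IsSyzygy n K M ∧ Projective K

/-- projective dimension = n. -/
def PdEq (M : ModuleCat.{0} Λ) (n : ℕ) : Prop :=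
  PdLE M n ∧ ∀ m : ℕ, PdLE M m → n ≤ m

/-- injective dimension ≤ n : the n-th minimal cosyzygy is injective. -/
def IdLE (M : ModuleCat.{0} Λ) (n : ℕ) : Prop :=
  ∃ C : ModuleCat.{0} Λ, IsCosyzygy n C M ∧ Injective C

/-- injective dimension = n. -/
def IdEq (M : ModuleCat.{0} Λ) (n : ℕ) : Prop :=
  IdLE M n ∧ ∀ m : ℕ, IdLE M m → n ≤ m

/-- `M` is an indecomposable module. -/
def Indec (M : ModuleCat.{0} Λ) : Prop :=
  Nontrivial M ∧ ∀ A B : Submodule Λ M, IsCompl A B → A = ⊥ ∨ B = ⊥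

/-- `X` is a direct summand of `Z`. -/
def IsSummand (X Z : ModuleCat.{0} Λ) : Prop :=
  ∃ (s : X ⟶ Z) (r : Z ⟶ X), s ≫ r = 𝟙 X

/-- `I` is the `i`-th term of the minimal injective resolution of `M`, i.e. the
injective envelope of the `i`-th cosyzygy of `M`. -/
def IsInjTerm (i : ℕ) (I M : ModuleCat.{0} Λ) : Prop :=
  ∃ C : ModuleCat.{0} Λ, IsCosyzygy i C M ∧ ∃ f : C ⟶ I, IsInjEnv f

/-- `P` is the `i`-th term of the minimal projective resolution of `M`, i.e. the
projective cover of the `i`-th syzygy of `M`. -/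
def IsProjTerm (i : ℕ) (P M : ModuleCat.{0} Λ) : Prop :=
  ∃ K : ModuleCat.{0} Λ, IsSyzygy i K M ∧ ∃ f : P ⟶ K, IsProjCover f

end Preamble

section GD

variable (Λ : Type) [Ring Λ]

/-- The global dimension of `Λ` (computed on `mod Λ`, the finitely generated
left `Λ`-modules) equals `n`. -/
def GlDimEq (n : ℕ) : Prop :=
  (∀ M : ModuleCat.{0} Λ, Module.Finite Λ M → PdLE M n) ∧
    ∃ M : ModuleCat.{0} Λ, Module.Finite Λ M ∧ ∀ m : ℕ, m < n → ¬ PdLE M m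

/-- `Λ` is an `(n-1)`-Auslander algebra with global dimension `n`:
`gl.dim Λ = n` and the terms `I⁰(Λ), …, I^{n-1}(Λ)` of the minimal injective
resolution of the regular module are projective. -/
def IsAuslander (n : ℕ) : Prop :=
  GlDimEq Λ n ∧ ∀ i : ℕ, i < n → ∀ I : ModuleCat.{0} Λ,
    IsInjTerm i I (ModuleCat.of Λ Λ) → Projective I

/-- `Ext^i_Λ(X, Y) = 0`. -/
def ExtIsZero (i : ℕ) (X Y : ModuleCat.{0} Λ) : Prop :=
  Subsingleton (((Ext ℤ (ModuleCat.{0} Λ) i).obj (Opposite.op X)).obj Y)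

/-- A class `𝒞` of (finitely generated) modules is contravariantly finite in `mod Λ`. -/
def ContravFinite (𝒞 : ModuleCat.{0} Λ → Prop) : Prop :=
  ∀ M : ModuleCat.{0} Λ, Module.Finite Λ M →
    ∃ (X : ModuleCat.{0} Λ) (f : X ⟶ M), 𝒞 X ∧
      ∀ (Y : ModuleCat.{0} Λ) (g : Y ⟶ M), 𝒞 Y → ∃ h : Y ⟶ X, h ≫ f = g

/-- A class `𝒞` of (finitely generated) modules is covariantly finite in `mod Λ`. -/
def CovarFinite (𝒞 : ModuleCat.{0} Λ → Prop) : Prop :=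
  ∀ M : ModuleCat.{0} Λ, Module.Finite Λ M →
    ∃ (X : ModuleCat.{0} Λ) (f : M ⟶ X), 𝒞 X ∧
      ∀ (Y : ModuleCat.{0} Λ) (g : M ⟶ Y), 𝒞 Y → ∃ h : X ⟶ Y, f ≫ h = g

/-- `𝒞` is a maximal `m`-orthogonal subcategory of `mod Λ`: it is functorially
finite and coincides with both of its `m`-orthogonal classes. -/
def MaxOrthogonal (m : ℕ) (𝒞 : ModuleCat.{0} Λ → Prop) : Prop :=
  (∀ X, 𝒞 X → Module.Finite Λ X) ∧
  ContravFinite Λ 𝒞 ∧ CovarFinite Λ 𝒞 ∧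
  (∀ X : ModuleCat.{0} Λ, Module.Finite Λ X →
    (𝒞 X ↔ ∀ Y, 𝒞 Y → ∀ i, 1 ≤ i → i ≤ m → ExtIsZero Λ i X Y)) ∧
  (∀ X : ModuleCat.{0} Λ, Module.Finite Λ X →
    (𝒞 X ↔ ∀ Y, 𝒞 Y → ∀ i, 1 ≤ i → i ≤ m → ExtIsZero Λ i Y X))

/-- The class `add (Λ ⊕ DΛ^op)`: finitely generated modules which are direct
summands of (finitely generated projective) ⊕ (finitely generated injective). -/
def AddProjInj (X : ModuleCat.{0} Λ) : Prop :=
  Module.Finite Λ X ∧ ∃ P I : ModuleCat.{0} Λ, Module.Finite Λ P ∧ Module.Finite Λ I ∧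
    Projective P ∧ Injective I ∧ IsSummand X (P ⊞ I)

/-- `Λ` admits a trivial maximal `m`-orthogonal subcategory of `mod Λ`, namely
`add (Λ ⊕ DΛ^op)`. -/
def HasTrivialMaxOrthogonal (m : ℕ) : Prop :=
  MaxOrthogonal Λ m (AddProjInj Λ)

end GD

theorem stmt2_key (Λ : Type) [Ring Λ] (A B C C' : ModuleCat.{0} Λ) (g : A ⟶ B) (f : B ⟶ C)
    (hg : Function.Injective g) (hf : Function.Surjective f)
    (hex : LinearMap.range g.hom = LinearMap.ker f.hom)
    (s : C' ⟶ C) (hext : ExtIsZero Λ 1 C' A) : ∃ t : C' ⟶ B, t ≫ f = s := by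
  classical
  have hepif : Epi f := (ModuleCat.epi_iff_surjective f).2 hf
  let P : ProjectiveResolution C' := (HasProjectiveResolution.out (Z := C')).some
  let u₀ : P.complex.X 0 ⟶ B := Projective.factorThru (P.π.f 0 ≫ s) f
  have hu₀ : u₀ ≫ f = P.π.f 0 ≫ s := Projective.factorThru_comp _ _
  set D : P.complex.X 1 ⟶ B := P.complex.d 1 0 ≫ u₀ with hD
  have hDrange : ∀ x, D x ∈ LinearMap.range g.hom := by
    intro x
    rw [hex, LinearMap.mem_ker]
    have h1 : f (D x) = (u₀ ≫ f) ((P.complex.d 1 0) x) := rfl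
    rw [h1, hu₀]
    have h2 : (P.π.f 0 ≫ s) ((P.complex.d 1 0) x) = (P.complex.d 1 0 ≫ P.π.f 0 ≫ s) x := rfl
    rw [h2]
    erw [← Category.assoc, P.complex_d_comp_π_f_zero, Limits.zero_comp]
    rfl
  let eA := LinearEquiv.ofInjective g.hom hg
  let φ : P.complex.X 1 ⟶ A := ModuleCat.ofHom <|
    eA.symm.toLinearMap ∘ₗ D.hom.codRestrict _ hDrange
  have hgφ : ∀ x, g (φ x) = D x := by
    intro x
    show g.hom (eA.symm ⟨D x, hDrange x⟩) = D x
    rw [← LinearEquiv.ofInjective_apply g.hom (h := hg)]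
    exact congrArg Subtype.val (eA.apply_symm_apply _)
  -- φ is a cocycle
  have hcocycle : P.complex.d 2 1 ≫ φ = 0 := by
    have hm : Mono g := (ModuleCat.mono_iff_injective g).2 hg
    have hφg : φ ≫ g = D := ModuleCat.hom_ext (LinearMap.ext hgφ)
    rw [← cancel_mono g, Limits.zero_comp, Category.assoc, hφg, hD, ← Category.assoc,
      HomologicalComplex.d_comp_d, Limits.zero_comp]
  -- exactness of the Hom complex at 1
  set K := P.complex.linearYonedaObj ℤ A with hK
  have hsub : Subsingleton (K.homology 1) := by
    haveI hext' : Subsingleton (((Ext ℤ (ModuleCat.{0} Λ) 1).obj (Opposite.op C')).obj A) := hext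
    exact (((forget (ModuleCat ℤ)).mapIso (P.isoExt (R := ℤ) 1 A)).toEquiv.symm).subsingleton
  have hgf : g ≫ f = 0 := by
    apply ModuleCat.hom_ext; apply LinearMap.ext; intro a
    have : g a ∈ LinearMap.ker f.hom := by
      rw [← hex]; exact ⟨a, rfl⟩
    exact this
  have hzero : IsZero (K.homology 1) := @ModuleCat.isZero_of_subsingleton _ _ _ hsub
  have hexact : K.ExactAt 1 := (HomologicalComplex.exactAt_iff_isZero_homology K 1).2 hzero
  have hsc : (K.sc' 0 1 2).Exact :=
    (HomologicalComplex.exactAt_iff' K 0 1 2 (by simp) (by simp)).1 hexact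
  have hmod := (ShortComplex.moduleCat_exact_iff _).1 hsc
  have hφz : (K.d 1 2) φ = 0 := hcocycle
  obtain ⟨ψ, hψ⟩ := hmod φ hφz
  have hψ' : P.complex.d 1 0 ≫ (ψ : P.complex.X 0 ⟶ A) = φ := hψ
  set u₀' : P.complex.X 0 ⟶ B := u₀ - (ψ : P.complex.X 0 ⟶ A) ≫ g with hu₀'
  have hφgD : (φ : P.complex.X 1 ⟶ A) ≫ g = D := ModuleCat.hom_ext (LinearMap.ext hgφ)
  have hud : P.complex.d 1 0 ≫ u₀' = 0 := by
    rw [hu₀', Preadditive.comp_sub, ← hD]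
    erw [← Category.assoc, hψ', hφgD, sub_self]
  let cf : CokernelCofork (P.complex.d 1 0) := CokernelCofork.ofπ u₀' hud
  let t : C' ⟶ B := P.isColimitCokernelCofork.desc cf
  have hdesc : P.π.f 0 ≫ t = u₀' := Cofork.IsColimit.π_desc P.isColimitCokernelCofork
  refine ⟨t, ?_⟩
  apply (cancel_epi (P.π.f 0)).1
  erw [← Category.assoc, hdesc, hu₀', Preadditive.sub_comp, hu₀,
    Category.assoc, hgf, Limits.comp_zero, sub_zero]

/-- if `g` is left minimal in a non-split short exact sequence, then
`Ext¹(C', A) ≠ 0` for every non-zero direct summand `C'` of `C`. -/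
theorem stmt2 (Λ : Type) [Ring Λ] [IsArtinianRing Λ]
    (A B C : ModuleCat.{0} Λ)
    (hA : Module.Finite Λ A) (hB : Module.Finite Λ B) (hC : Module.Finite Λ C)
    (g : A ⟶ B) (f : B ⟶ C)
    (hg : Function.Injective g) (hf : Function.Surjective f)
    (hex : LinearMap.range g.hom = LinearMap.ker f.hom)
    (hns : ¬ ∃ r : B ⟶ A, g ≫ r = 𝟙 A)
    (hmin : ∀ h : B ⟶ B, g ≫ h = g → IsIso h) :
    ∀ C' : ModuleCat.{0} Λ, Nontrivial C' → IsSummand C' C → ¬ ExtIsZero Λ 1 C' A := by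
  intro C' hnt hsum hext
  obtain ⟨s, r, hsr⟩ := hsum
  obtain ⟨t, ht⟩ := stmt2_key Λ A B C C' g f hg hf hex s hext
  have hgf : g ≫ f = 0 := by
    apply ModuleCat.hom_ext; apply LinearMap.ext; intro a
    have : g a ∈ LinearMap.ker f.hom := by
      rw [← hex]; exact ⟨a, rfl⟩
    exact this
  set h : B ⟶ B := 𝟙 B - f ≫ r ≫ t with hh
  have hiso : IsIso h := by
    apply hmin
    rw [hh, Preadditive.comp_sub, Category.comp_id, ← Category.assoc, hgf,
      Limits.zero_comp, sub_zero]
  have hhf : h ≫ f = f ≫ (𝟙 C - r ≫ s) := by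
    rw [hh, Preadditive.sub_comp, Category.id_comp, Preadditive.comp_sub, Category.comp_id]
    congr 1
    rw [Category.assoc, Category.assoc, ht]
  have hhsurj : Function.Surjective h := by
    haveI := hiso
    exact (ModuleCat.epi_iff_surjective h).1 inferInstance
  set q : C ⟶ C := 𝟙 C - r ≫ s with hq
  have hqsurj : Function.Surjective q := by
    intro c
    obtain ⟨b, hb⟩ := hf c
    obtain ⟨b', hb'⟩ := hhsurj b
    refine ⟨f b', ?_⟩
    have := ConcreteCategory.congr_hom hhf b'
    have h1 : f (h b') = q (f b') := this
    rw [← h1, hb', hb]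
  have hrs : ∀ y : C', r (s y) = y := fun y => ConcreteCategory.congr_hom hsr y
  have he0 : ∀ c : C, s (r c) = 0 := by
    intro c
    obtain ⟨x, hx⟩ := hqsurj c
    have hx' : x - s (r x) = c := hx
    rw [← hx']
    have : s (r (x - s (r x))) = s (r x) - s (r (s (r x))) := by
      rw [map_sub, map_sub]
    rw [this, hrs, sub_self]
  have hall : ∀ c' : C', c' = 0 := by
    intro c'
    have h1 : s c' = 0 := by
      have := he0 (s c')
      rwa [hrs] at this
    have := hrs c'
    rw [h1, map_zero] at this
    exact this.symm
  obtain ⟨x, y, hxy⟩ := hnt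
  exact hxy ((hall x).trans (hall y).symm)
end

section
/- Let 0 → A →g B →f C → 0 be a non-split short exact sequence in mod Λ. If f is right minimal, then Ext_Λ^1(C, A') ≠ 0 for every non-zero direct summand A' of A. -/
open CategoryTheory CategoryTheory.Limits

section Aux

variable {Λ : Type} [Ring Λ]

/-- If Ext¹(C,Y) is trivial, any surjection onto C with kernel Y admits a retraction onto Y. -/
lemma ext1_zero_retraction (C Y B' : ModuleCat.{0} Λ)
    (hext : Subsingleton (((Ext ℤ (ModuleCat.{0} Λ) 1).obj (Opposite.op C)).obj Y))
    (f' : B' ⟶ C) (j : Y ⟶ B')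
    (hf' : Function.Surjective f') (hj : Function.Injective j)
    (hker : LinearMap.ker (f').hom = LinearMap.range (j).hom) :
    ∃ t : B' ⟶ Y, j ≫ t = 𝟙 Y := by
  classical
  let P : ProjectiveResolution C := (HasProjectiveResolution.out (Z := C)).some
  let p : P.complex.X 0 ⟶ C := P.π.f 0
  have hp : Function.Surjective p := (ModuleCat.epi_iff_surjective p).1 (show Epi (P.π.f 0) from inferInstance)
  -- exactness at 0 : range (d 1 0) = ker p
  have hex0 : LinearMap.range (P.complex.d 1 0).hom = LinearMap.ker (p).hom := by
    have := ShortComplex.exact_of_g_is_cokernel (ShortComplex.mk _ _ P.complex_d_comp_π_f_zero) P.isColimitCokernelCofork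
    rw [ShortComplex.moduleCat_exact_iff_range_eq_ker] at this
    exact this
  -- hom complex
  let K := P.complex.linearYonedaObj ℤ Y
  have hKz : IsZero (K.homology 1) := by
    have h0 : IsZero (((Ext ℤ (ModuleCat.{0} Λ) 1).obj (Opposite.op C)).obj Y) :=
      @ModuleCat.isZero_of_subsingleton ℤ _ _ hext
    exact h0.of_iso (P.isoExt 1 Y).symm
  have hKex : (K.sc' 0 1 2).Exact := by
    have := (HomologicalComplex.exactAt_iff_isZero_homology K 1).2 hKz
    exact (HomologicalComplex.exactAt_iff' K 0 1 2 (by simp) (by simp)).1 this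
  rw [ShortComplex.moduleCat_exact_iff] at hKex
  -- lift p along f' using projectivity
  have : Epi f' := (ModuleCat.epi_iff_surjective f').2 hf'
  have : Projective (P.complex.X 0) := P.projective 0
  let π' : P.complex.X 0 ⟶ B' := Projective.factorThru p f'
  have hπ' : π' ≫ f' = p := Projective.factorThru_comp p f'
  -- inverse of j on its range
  let e : Y ≃ₗ[Λ] LinearMap.range (j).hom := LinearEquiv.ofInjective _ hj
  have hje : ∀ (w : LinearMap.range (j).hom), j (e.symm w) = (w : B') := by
    intro w
    have h := congrArg Subtype.val (e.apply_symm_apply w)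
    rwa [show (↑(e (e.symm w)) : B') = j (e.symm w) from LinearEquiv.ofInjective_apply (j).hom _] at h
  -- the cocycle φ : P₁ ⟶ Y
  have hmem : ∀ x : P.complex.X 1, π' (P.complex.d 1 0 x) ∈ LinearMap.range (j).hom := by
    intro x
    rw [← hker]
    show f' (π' (P.complex.d 1 0 x)) = 0
    have : (P.complex.d 1 0 ≫ π' ≫ f') x = (P.complex.d 1 0 ≫ p) x := by rw [hπ']
    have h2 : (P.complex.d 1 0 ≫ P.π.f 0) x = 0 := by rw [P.complex_d_comp_π_f_zero]; rfl
    exact this.trans h2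
  let φ : P.complex.X 1 ⟶ Y := ModuleCat.ofHom (
    e.symm.toLinearMap ∘ₗ LinearMap.codRestrict _ ((π').hom ∘ₗ (P.complex.d 1 0).hom) hmem)
  have hφd : (K.d 1 2) φ = 0 := by
    show P.complex.d 2 1 ≫ φ = 0
    apply ModuleCat.hom_ext; apply LinearMap.ext
    intro x
    show e.symm ⟨π' (P.complex.d 1 0 (P.complex.d 2 1 x)), _⟩ = 0
    have hdd : P.complex.d 1 0 (P.complex.d 2 1 x) = 0 :=
      LinearMap.congr_fun (congrArg ModuleCat.Hom.hom (HomologicalComplex.d_comp_d P.complex 2 1 0)) x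
    have : (⟨π' (P.complex.d 1 0 (P.complex.d 2 1 x)), hmem _⟩ :
        LinearMap.range (j).hom) = 0 := by
      ext; simp [hdd]
    rw [this]; simp
  obtain ⟨ψ₀, hψ₀⟩ := hKex φ hφd
  let ψ : P.complex.X 0 ⟶ Y := ψ₀
  have hψ : P.complex.d 1 0 ≫ ψ = φ := hψ₀
  have hψ' : ∀ x : P.complex.X 1, ψ (P.complex.d 1 0 x) = φ x := by
    intro x
    have : (P.complex.d 1 0 ≫ ψ) x = φ x := by
      rw [show P.complex.d 1 0 ≫ ψ = φ from hψ]
    exact this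
  -- θ := π' - j ∘ ψ kills ker p
  let θ : P.complex.X 0 ⟶ B' := π' - (ψ ≫ j)
  have hθker : LinearMap.ker (p).hom ≤ LinearMap.ker (θ).hom := by
    intro x hx
    rw [← hex0] at hx
    obtain ⟨y, rfl⟩ := hx
    show π' (P.complex.d 1 0 y) - j (ψ (P.complex.d 1 0 y)) = 0
    rw [hψ' y]
    show π' (P.complex.d 1 0 y) - j (e.symm ⟨π' (P.complex.d 1 0 y), hmem y⟩) = 0
    rw [hje]; simp
  -- factor θ through C
  let q : (P.complex.X 0 ⧸ LinearMap.ker (p).hom) ≃ₗ[Λ] C :=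
    (p).hom.quotKerEquivOfSurjective hp
  let σ : C ⟶ B' := ModuleCat.ofHom (((LinearMap.ker (p).hom).liftQ (θ).hom hθker) ∘ₗ q.symm.toLinearMap)
  have hσ : ∀ x, σ (p x) = θ x := by
    intro x
    have hq : q (Submodule.Quotient.mk x) = p x := by
      simp [q, LinearMap.quotKerEquivOfSurjective, LinearMap.quotKerEquivRange]
    show ((LinearMap.ker (p).hom).liftQ (θ).hom hθker) (q.symm (p x)) = θ x
    rw [← hq, q.symm_apply_apply]
    rfl
  have hσf : σ ≫ f' = 𝟙 C := by
    apply ModuleCat.hom_ext; apply LinearMap.ext; intro c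
    obtain ⟨x, rfl⟩ := hp c
    show f' (σ (p x)) = p x
    rw [hσ]
    show f' (π' x - j (ψ x)) = p x
    have h1 : f' (π' x) = p x := by
      have : (π' ≫ f') x = p x := by rw [hπ']
      exact this
    have h2 : f' (j (ψ x)) = 0 := by
      have : j (ψ x) ∈ LinearMap.ker (f').hom := by
        rw [hker]; exact ⟨ψ x, rfl⟩
      exact this
    simp [map_sub, h1, h2]
  -- retraction: t b' := e.symm (b' - σ (f' b'))
  have hmem2 : ∀ b' : B', b' - σ (f' b') ∈ LinearMap.range (j).hom := by
    intro b'
    rw [← hker]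
    show f' (b' - σ (f' b')) = 0
    have : f' (σ (f' b')) = f' b' := by
      have : (σ ≫ f') (f' b') = (𝟙 C : C ⟶ C) (f' b') := by rw [hσf]
      exact this
    simp [map_sub, this]
  let t : B' ⟶ Y := ModuleCat.ofHom (e.symm.toLinearMap ∘ₗ
    LinearMap.codRestrict _ (LinearMap.id - (σ).hom ∘ₗ (f').hom) hmem2)
  refine ⟨t, ?_⟩
  apply ModuleCat.hom_ext; apply LinearMap.ext; intro y
  show e.symm ⟨j y - σ (f' (j y)), _⟩ = y
  have hfj : f' (j y) = 0 := by
    have : j y ∈ LinearMap.ker (f').hom := by rw [hker]; exact ⟨y, rfl⟩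
    exact this
  have : (⟨j y - σ (f' (j y)), hmem2 _⟩ : LinearMap.range (j).hom) = e y := by
    ext
    show j y - σ (f' (j y)) = _
    rw [hfj, map_zero, sub_zero]
    exact (LinearEquiv.ofInjective_apply (j).hom y).symm
  rw [this, e.symm_apply_apply]

end Aux

/-- if `f` is right minimal in a non-split short exact sequence, then
`Ext¹(C, A') ≠ 0` for every non-zero direct summand `A'` of `A`. -/
theorem stmt3 (Λ : Type) [Ring Λ] [IsArtinianRing Λ]
    (A B C : ModuleCat.{0} Λ)
    (hA : Module.Finite Λ A) (hB : Module.Finite Λ B) (hC : Module.Finite Λ C)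
    (g : A ⟶ B) (f : B ⟶ C)
    (hg : Function.Injective g) (hf : Function.Surjective f)
    (hex : LinearMap.range g.hom = LinearMap.ker f.hom)
    (hns : ¬ ∃ s : C ⟶ B, s ≫ f = 𝟙 C)
    (hmin : ∀ h : B ⟶ B, h ≫ f = f → IsIso h) :
    ∀ A' : ModuleCat.{0} Λ, Nontrivial A' → IsSummand A' A → ¬ ExtIsZero Λ 1 C A' := by
  
  rintro A' hA' ⟨s, r, hsr⟩ hext
  have hfg : ∀ a : A, f (g a) = 0 := by
    intro a
    have : g a ∈ LinearMap.ker (f).hom := by rw [← hex]; exact ⟨a, rfl⟩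
    exact this
  have hrs : ∀ a' : A', r (s a') = a' := fun a' => LinearMap.congr_fun (congrArg ModuleCat.Hom.hom hsr) a'
  -- pushout of the sequence along r
  let rel : Submodule Λ (B × A') :=
    LinearMap.range (LinearMap.prod (g).hom (-(r).hom))
  let B' : ModuleCat.{0} Λ := ModuleCat.of Λ ((B × A') ⧸ rel)
  let ι : B ⟶ B' := ModuleCat.ofHom (rel.mkQ ∘ₗ LinearMap.inl Λ B A')
  let j : A' ⟶ B' := ModuleCat.ofHom (rel.mkQ ∘ₗ LinearMap.inr Λ B A')
  have hrel : ∀ a : A, ((g a, -(r a)) : B × A') ∈ rel := fun a => ⟨a, rfl⟩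
  have hle : rel ≤ LinearMap.ker ((f).hom ∘ₗ LinearMap.fst Λ B A') := by
    rintro ⟨b, a'⟩ ⟨a, ha⟩
    have hb : g a = b := congrArg Prod.fst ha
    show f b = 0
    rw [← hb]; exact hfg a
  let f' : B' ⟶ C := ModuleCat.ofHom (rel.liftQ ((f).hom ∘ₗ LinearMap.fst Λ B A') hle)
  have hf'ι : ∀ b : B, f' (ι b) = f b := fun b => rfl
  have hf'j : ∀ a' : A', f' (j a') = 0 := fun a' => map_zero f.hom
  have hιj : ∀ a : A, ι (g a) = j (r a) := by
    intro a
    show rel.mkQ (g a, 0) = rel.mkQ (0, r a)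
    rw [Submodule.mkQ_apply, Submodule.mkQ_apply, Submodule.Quotient.eq]
    have heq : ((g a, (0 : A')) : ↑B × ↑A') - (0, r a) = (g a, -(r a)) := by
      ext <;> simp
    rw [heq]
    exact hrel a
  have hf's : Function.Surjective f' := by
    intro c
    obtain ⟨b, rfl⟩ := hf c
    exact ⟨ι b, rfl⟩
  have hjinj : Function.Injective j := by
    have : ∀ a' : A', j a' = 0 → a' = 0 := by
      intro a' h
      have : ((0 : B), a') ∈ rel := (Submodule.Quotient.mk_eq_zero rel).1 h
      obtain ⟨a, ha⟩ := this
      have h1 : g a = 0 := congrArg Prod.fst ha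
      have h2 : -(r a) = a' := congrArg Prod.snd ha
      have : a = 0 := hg (by simpa using h1)
      rw [← h2, this]; simp
    intro x y hxy
    have : j (x - y) = 0 := by rw [map_sub, hxy, sub_self]
    have := this; have h0 := ‹∀ a' : A', j a' = 0 → a' = 0› (x - y) this
    exact sub_eq_zero.1 h0
  have hker : LinearMap.ker (f').hom = LinearMap.range (j).hom := by
    apply le_antisymm
    · rintro x hx
      obtain ⟨⟨b, a'⟩, rfl⟩ := Submodule.mkQ_surjective rel x
      have hfb : f b = 0 := hx
      have : b ∈ LinearMap.range (g).hom := by rw [hex]; exact hfb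
      obtain ⟨a, rfl⟩ := this
      refine ⟨a' + r a, ?_⟩
      show rel.mkQ (0, a' + r a) = rel.mkQ (g a, a')
      rw [Submodule.mkQ_apply, Submodule.mkQ_apply, Submodule.Quotient.eq]
      have : ((0 : B), a' + r a) - (g a, a') = -(g a, -(r a)) := by
        ext <;> simp
      rw [this]
      exact neg_mem (hrel a)
    · rintro x ⟨a', rfl⟩
      exact hf'j a'
  obtain ⟨t', ht'⟩ := ext1_zero_retraction C A' B' hext f' j hf's hjinj hker
  let t : B ⟶ A' := ι ≫ t'
  have htg : ∀ a : A, t (g a) = r a := by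
    intro a
    show t' (ι (g a)) = r a
    rw [hιj a]
    exact LinearMap.congr_fun (congrArg ModuleCat.Hom.hom ht') (r a)
  -- the contradiction with right minimality
  let h : B ⟶ B := 𝟙 B - (t ≫ s ≫ g)
  have hhf : h ≫ f = f := by
    apply ModuleCat.hom_ext; apply LinearMap.ext; intro b
    show f (b - g (s (t b))) = f b
    rw [map_sub, hfg, sub_zero]
  have : IsIso h := hmin h hhf
  have hmono : Function.Injective h := by
    rw [← ModuleCat.mono_iff_injective]
    infer_instance
  obtain ⟨a₀, ha₀⟩ := exists_ne (0 : A')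
  have : h (g (s a₀)) = 0 := by
    show g (s a₀) - g (s (t (g (s a₀)))) = 0
    rw [htg, hrs, sub_self]
  have h0 : g (s a₀) = 0 := by
    apply hmono
    rw [this, map_zero]
  have : s a₀ = 0 := hg (by simpa using h0)
  have : a₀ = 0 := by rw [← hrs a₀, this, map_zero]
  exact ha₀ this
end

section
/- Let M ∈ mod Λ be an indecomposable non-injective module whose injective envelope I⁰(M) is projective. Then appending the quotient map I⁰(M) → I⁰(M)/M to a minimal projective resolution of M yields a minimal projective resolution of I⁰(M)/M; in particular pd(I⁰(M)/M) = pd(M) + 1. -/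
open CategoryTheory CategoryTheory.Limits

open CategoryTheory Submodule LinearMap

namespace Stmt5Aux
variable {Λ : Type} [Ring Λ]
variable {M : Type} [AddCommGroup M] [Module Λ M]

/-- kill persists under higher powers -/
lemma pow_kill (g : M →ₗ[Λ] M) {k l : ℕ} (h : k ≤ l) {m : M} (hm : (g ^ k) m = 0) :
    (g ^ l) m = 0 := by
  obtain ⟨j, rfl⟩ := Nat.exists_eq_add_of_le h
  rw [add_comm, pow_add, Module.End.mul_apply, hm, map_zero]

/-- the locally nilpotent kernel of an endomorphism -/
def locKer (g : M →ₗ[Λ] M) : Submodule Λ M where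
  carrier := {m | ∃ k : ℕ, (g ^ k) m = 0}
  add_mem' := by
    rintro a b ⟨k, hk⟩ ⟨l, hl⟩
    exact ⟨max k l, by
      rw [map_add, pow_kill g (le_max_left k l) hk, pow_kill g (le_max_right k l) hl, add_zero]⟩
  zero_mem' := ⟨0, map_zero _⟩
  smul_mem' := by
    rintro c a ⟨k, hk⟩
    exact ⟨k, by rw [map_smul, hk, smul_zero]⟩

lemma mem_locKer {g : M →ₗ[Λ] M} {m : M} : m ∈ locKer g ↔ ∃ k : ℕ, (g ^ k) m = 0 := Iff.rfl

variable {I : Type} [AddCommGroup I] [Module Λ I]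

lemma pow_comp_apply (f : M →ₗ[Λ] I) (θ : I →ₗ[Λ] M) :
    ∀ (k : ℕ) (m : M), ((f ∘ₗ θ) ^ k) (f m) = f (((θ ∘ₗ f) ^ k) m) := by
  intro k
  induction k with
  | zero => intro m; simp
  | succ k ih =>
    intro m
    rw [pow_succ, pow_succ, Module.End.mul_apply, Module.End.mul_apply]
    have : (f ∘ₗ θ) (f m) = f ((θ ∘ₗ f) m) := rfl
    rw [this, ih]

/-- telescoping: if γ ≡ id mod U and U arbitrary submodule, then γ^k ≡ id mod U -/
lemma telescope {γ : M →ₗ[Λ] M} {U : Submodule Λ M} (h : ∀ m, γ m - m ∈ U) :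
    ∀ (k : ℕ) (m : M), (γ ^ k) m - m ∈ U := by
  intro k
  induction k with
  | zero => intro m; simp
  | succ k ih =>
    intro m
    have : (γ ^ (k+1)) m - m = ((γ ^ k) (γ m) - γ m) + (γ m - m) := by
      rw [pow_succ, Module.End.mul_apply]; abel
    rw [this]
    exact add_mem (ih (γ m)) (h m)

/-- THE STEP: quotient comparison producing a "relative inverse" of f modulo locKer. -/
lemma step [IsArtinian Λ M] (f : M →ₗ[Λ] I) (hf : Function.Injective f) (θ : I →ₗ[Λ] M) :
    ∃ ρ : I →ₗ[Λ] (M ⧸ locKer (θ ∘ₗ f)), ∀ m : M, ρ (f m) = Submodule.Quotient.mk m := by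
  set g := θ ∘ₗ f with hg
  set φ := f ∘ₗ θ with hφ
  set W := locKer g with hW
  set Φ := locKer φ with hΦ
  have hfW : W ≤ Φ.comap f := by
    rintro m ⟨k, hk⟩
    exact ⟨k, by rw [pow_comp_apply f θ k m, hk, map_zero]⟩
  have hθΦ : Φ ≤ W.comap θ := by
    rintro x ⟨k, hk⟩
    exact ⟨k, by rw [pow_comp_apply θ f k x, hk, map_zero]⟩
  set f' : (M ⧸ W) →ₗ[Λ] (I ⧸ Φ) := W.mapQ Φ f hfW with hf'
  set θ' : (I ⧸ Φ) →ₗ[Λ] (M ⧸ W) := Φ.mapQ W θ hθΦ with hθ'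
  have hf'inj : Function.Injective f' := by
    intro a b hab
    obtain ⟨m₁, rfl⟩ := W.mkQ_surjective a
    obtain ⟨m₂, rfl⟩ := W.mkQ_surjective b
    rw [hf'] at hab
    simp only [mkQ_apply, mapQ_apply] at hab
    rw [Submodule.Quotient.eq] at hab
    refine (Submodule.Quotient.eq W).mpr ?_
    obtain ⟨k, hk⟩ := hab
    rw [← map_sub, pow_comp_apply f θ k] at hk
    exact ⟨k, hf (by rw [hk, map_zero])⟩
  have hθ'inj : Function.Injective θ' := by
    intro a b hab
    obtain ⟨x₁, rfl⟩ := Φ.mkQ_surjective a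
    obtain ⟨x₂, rfl⟩ := Φ.mkQ_surjective b
    rw [hθ'] at hab
    simp only [mkQ_apply, mapQ_apply] at hab
    rw [Submodule.Quotient.eq] at hab
    refine (Submodule.Quotient.eq Φ).mpr ?_
    obtain ⟨k, hk⟩ := hab
    rw [← map_sub, pow_comp_apply θ f k] at hk
    refine ⟨k + 1, ?_⟩
    rw [pow_succ', Module.End.mul_apply]
    have h2 : φ ((φ ^ k) (x₁ - x₂)) = f (θ ((φ ^ k) (x₁ - x₂))) := rfl
    rw [h2, hφ, hk, map_zero]
  have hg'inj : Function.Injective (θ' ∘ₗ f') := hθ'inj.comp hf'inj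
  have hg'surj : Function.Surjective (θ' ∘ₗ f') :=
    IsArtinian.surjective_of_injective_endomorphism _ hg'inj
  have hθ'surj : Function.Surjective θ' := by
    intro y
    obtain ⟨x, hx⟩ := hg'surj y
    exact ⟨f' x, hx⟩
  haveI : IsArtinian Λ (I ⧸ Φ) := isArtinian_of_injective θ' hθ'inj
  have hφ'inj : Function.Injective (f' ∘ₗ θ') := hf'inj.comp hθ'inj
  have hφ'surj : Function.Surjective (f' ∘ₗ θ') :=
    IsArtinian.surjective_of_injective_endomorphism _ hφ'inj
  have hf'surj : Function.Surjective f' := by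
    intro y
    obtain ⟨x, hx⟩ := hφ'surj y
    exact ⟨θ' x, hx⟩
  set fe := LinearEquiv.ofBijective f' ⟨hf'inj, hf'surj⟩ with hfe
  refine ⟨fe.symm.toLinearMap ∘ₗ Φ.mkQ, fun m => ?_⟩
  have : (Φ.mkQ) (f m) = fe (Submodule.Quotient.mk m) := by
    simp only [mkQ_apply]
    show _ = f' (Submodule.Quotient.mk m)
    rw [mapQ_apply]
  simp only [LinearMap.comp_apply, this]
  exact fe.symm_apply_apply _


lemma finset_uniform (γ : M →ₗ[Λ] M) (t : Finset M)
    (h : ∀ x ∈ t, ∃ k : ℕ, (γ ^ k) (γ x - x) = 0) :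
    ∃ k : ℕ, ∀ x ∈ t, (γ ^ k) (γ x - x) = 0 := by
  classical
  induction t using Finset.induction_on with
  | empty => exact ⟨0, by simp⟩
  | @insert a t ha ih =>
    obtain ⟨k₁, hk₁⟩ := ih (fun x hx => h x (Finset.mem_insert_of_mem hx))
    obtain ⟨k₂, hk₂⟩ := h a (Finset.mem_insert_self a t)
    refine ⟨max k₂ k₁, fun x hx => ?_⟩
    rcases Finset.mem_insert.mp hx with rfl | hx
    · exact pow_kill γ (le_max_left _ _) hk₂
    · exact pow_kill γ (le_max_right _ _) (hk₁ x hx)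

end Stmt5Aux

section MainAux
open Stmt5Aux
variable {Λ : Type} [Ring Λ]

set_option maxHeartbeats 1000000 in
/-- Core lemma: under the hypotheses of stmt5, for every `θ : I ⟶ M` the composite
`θ ∘ f` is locally nilpotent. -/
lemma stmt5_locKer_eq_top [IsArtinianRing Λ] (M I : ModuleCat.{0} Λ)
    (hMf : Module.Finite Λ M) (hM : Indec M) (hMni : ¬ CategoryTheory.Injective M)
    (f : M ⟶ I) (hfinj : Function.Injective f)
    (hIinj : CategoryTheory.Injective I) (hIproj : CategoryTheory.Projective I)
    (θ : I ⟶ M) :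
    locKer (θ.hom ∘ₗ f.hom) = ⊤ := by
  haveI := hMf
  haveI := hIproj
  haveI := hIinj
  set S : Set (Submodule Λ M) :=
    {W | ∃ τ : I ⟶ M, W = locKer (τ.hom ∘ₗ f.hom)} with hS
  obtain ⟨W₀, hW₀S, hmin⟩ := IsArtinian.set_has_minimal S ⟨_, θ, rfl⟩
  obtain ⟨τ, rfl⟩ := hW₀S
  suffices htop : locKer (τ.hom ∘ₗ f.hom) = ⊤ by
    by_contra hne
    exact hmin _ ⟨θ, rfl⟩ (htop ▸ lt_top_iff_ne_top.mpr hne)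
  set W := locKer (τ.hom ∘ₗ f.hom) with hWdef
  obtain ⟨ρ, hρ⟩ := step f.hom hfinj τ.hom
  let πW : M ⟶ ModuleCat.of Λ (M ⧸ W) := ModuleCat.ofHom W.mkQ
  haveI : Epi πW := (ModuleCat.epi_iff_surjective πW).mpr W.mkQ_surjective
  let ρh : I ⟶ ModuleCat.of Λ (M ⧸ W) := ModuleCat.ofHom ρ
  let θ' : I ⟶ M := Projective.factorThru ρh πW
  have hθ'c : θ' ≫ πW = ρh := Projective.factorThru_comp ρh πW
  have hkey : ∀ m : M, θ' (f m) - m ∈ W := by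
    intro m
    have h1 : πW (θ' (f m)) = ρ (f m) := ConcreteCategory.congr_hom hθ'c (f m)
    rw [hρ m] at h1
    exact (Submodule.Quotient.eq W).mp h1
  set γ : M →ₗ[Λ] M := θ'.hom ∘ₗ f.hom with hγdef
  have hγW : ∀ m, γ m - m ∈ W := fun m => hkey m
  have hWle : locKer γ ≤ W := by
    rintro m ⟨k, hk⟩
    have h2 := telescope hγW k m
    rw [hk, zero_sub] at h2
    simpa using neg_mem h2
  have hWeq : locKer γ = W := by
    rcases lt_or_eq_of_le hWle with h | h
    · exact absurd h (hmin _ ⟨θ', rfl⟩)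
    · exact h
  obtain ⟨s, hs⟩ := Module.Finite.fg_top (R := Λ) (M := M)
  obtain ⟨k, hk⟩ := finset_uniform γ s (fun x _ => (hWeq.symm ▸ hγW x : γ x - x ∈ locKer γ))
  have hpow : γ ^ (k + 1) = γ ^ k := by
    apply LinearMap.ext_on hs
    intro x hx
    have h2 : (γ ^ k) (γ x) - (γ ^ k) x = 0 := by rw [← map_sub]; exact hk x hx
    show (γ ^ (k + 1)) x = (γ ^ k) x
    rw [pow_succ, Module.End.mul_apply]
    exact sub_eq_zero.mp h2
  have hpowj : ∀ j : ℕ, γ ^ (k + j) = γ ^ k := by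
    intro j
    induction j with
    | zero => rfl
    | succ j ih =>
      have h3 : k + (j + 1) = (k + j) + 1 := rfl
      rw [h3, pow_succ, ih, ← pow_succ, hpow]
  set T := LinearMap.range (γ ^ k) with hT
  have hdisj : W ⊓ T = ⊥ := by
    rw [eq_bot_iff]
    rintro x ⟨hxW, m, rfl⟩
    rw [← hWeq] at hxW
    obtain ⟨j, hj⟩ := hxW
    have h4 : (γ ^ j) ((γ ^ k) m) = (γ ^ k) m := by
      rw [← Module.End.mul_apply, ← pow_add, add_comm j k, hpowj j]
    rw [Submodule.mem_bot, ← h4, hj]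
  have hcodis : W ⊔ T = ⊤ := by
    rw [Submodule.eq_top_iff']
    intro x
    have h5 : x - (γ ^ k) x ∈ W := by
      have := telescope hγW k x
      have h6 := neg_mem this
      rwa [neg_sub] at h6
    have h7 : x = (x - (γ ^ k) x) + (γ ^ k) x := by abel
    rw [h7]
    exact Submodule.add_mem_sup h5 (LinearMap.mem_range_self _ x)
  rcases hM.2 W T ⟨disjoint_iff.mpr hdisj, codisjoint_iff.mpr hcodis⟩ with hbot | hbot
  · exfalso
    have hsplit : f ≫ θ' = 𝟙 M := by
      refine ModuleCat.hom_ext (LinearMap.ext ?_)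
      intro m
      have h8 := hkey m
      rw [hbot, Submodule.mem_bot] at h8
      exact sub_eq_zero.mp h8
    exact hMni ⟨fun {X Y} u ι _ => ⟨CategoryTheory.Injective.factorThru (u ≫ f) ι ≫ θ', by
      rw [← Category.assoc, CategoryTheory.Injective.comp_factorThru, Category.assoc, hsplit,
        Category.comp_id]⟩⟩
  · rw [Submodule.eq_top_iff']
    intro m
    rw [← hWeq]
    refine ⟨k, ?_⟩
    have h9 : (γ ^ k) m ∈ T := LinearMap.mem_range_self _ m
    rw [hbot, Submodule.mem_bot] at h9
    exact h9

end MainAux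

section MainAux2
variable {Λ : Type} [Ring Λ]
open Stmt5Aux

/-- Part 1 of stmt5: `p : I ⟶ Q` is a projective cover. -/
lemma stmt5_isProjCover [IsArtinianRing Λ] (M I Q : ModuleCat.{0} Λ)
    (hMf : Module.Finite Λ M) (hM : Indec M) (hMni : ¬ CategoryTheory.Injective M)
    (f : M ⟶ I) (hf : IsInjEnv f) (hIproj : CategoryTheory.Projective I)
    (p : I ⟶ Q) (hp : Function.Surjective p)
    (hker : LinearMap.ker p.hom = LinearMap.range f.hom) :
    IsProjCover p := by
  obtain ⟨hIinj, hfinj, -⟩ := hf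
  refine ⟨hIproj, hp, ?_⟩
  intro N hN
  haveI := hIproj
  -- every x : I decomposes as n + f m with n ∈ N
  have hdec : ∀ x : I, ∃ n ∈ N, ∃ m : M, x = n + f m := by
    intro x
    have hx : p x ∈ Submodule.map p.hom N := by rw [hN]; trivial
    obtain ⟨n, hnN, hnp⟩ := hx
    have hxn : x - n ∈ LinearMap.ker p.hom := by
      rw [LinearMap.mem_ker, map_sub, hnp, sub_self]
    rw [hker] at hxn
    obtain ⟨m, hm⟩ := hxn
    exact ⟨n, hnN, m, by rw [hm]; abel⟩
  let π : I ⟶ ModuleCat.of Λ (I ⧸ N) := ModuleCat.ofHom N.mkQ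
  let e : M ⟶ ModuleCat.of Λ (I ⧸ N) := f ≫ π
  haveI : Epi e := by
    rw [ModuleCat.epi_iff_surjective]
    intro y
    obtain ⟨x, rfl⟩ := N.mkQ_surjective y
    obtain ⟨n, hnN, m, rfl⟩ := hdec x
    refine ⟨m, ?_⟩
    show N.mkQ (f m) = N.mkQ (n + f m)
    have hz : N.mkQ n = 0 := by
      rw [Submodule.mkQ_apply]
      exact (Submodule.Quotient.mk_eq_zero N).mpr hnN
    rw [map_add, hz, zero_add]
  let h : I ⟶ M := Projective.factorThru π e
  have hhc : h ≫ e = π := Projective.factorThru_comp π e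
  have hkey : ∀ x : I, f (h x) - x ∈ N := by
    intro x
    have h1 : π (f (h x)) = π x := ConcreteCategory.congr_hom hhc x
    exact (Submodule.Quotient.eq N).mp h1
  set g : M →ₗ[Λ] M := h.hom ∘ₗ f.hom with hgdef
  set U : Submodule Λ M := N.comap f.hom with hUdef
  have hgU : ∀ m : M, g m - m ∈ U := by
    intro m
    show f (g m - m) ∈ N
    rw [map_sub]
    exact hkey (f m)
  have hloc : locKer g = ⊤ :=
    stmt5_locKer_eq_top M I hMf hM hMni f hfinj hIinj hIproj h
  have hU : U = ⊤ := by
    rw [Submodule.eq_top_iff']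
    intro m
    have hm : m ∈ locKer g := hloc ▸ Submodule.mem_top
    obtain ⟨k, hk⟩ := hm
    have h2 := telescope hgU k m
    rw [hk, zero_sub] at h2
    simpa using neg_mem h2
  rw [Submodule.eq_top_iff']
  intro x
  obtain ⟨n, hnN, m, rfl⟩ := hdec x
  have hfm : f m ∈ N := by
    have : m ∈ U := hU ▸ Submodule.mem_top
    exact this
  exact add_mem hnN hfm

/-- iso of ModuleCat objects from a linear equiv -/
def equivIso {A B : ModuleCat.{0} Λ} (e : A ≃ₗ[Λ] B) : A ≅ B where
  hom := (ModuleCat.ofHom e.toLinearMap : A ⟶ B)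
  inv := (ModuleCat.ofHom e.symm.toLinearMap : B ⟶ A)
  hom_inv_id := ModuleCat.hom_ext (LinearMap.ext fun x => e.symm_apply_apply x)
  inv_hom_id := ModuleCat.hom_ext (LinearMap.ext fun x => e.apply_symm_apply x)

/-- composing a projective cover with an isomorphism is a projective cover -/
lemma IsProjCover.comp_equiv {P A B : ModuleCat.{0} Λ} {f : P ⟶ A} (hc : IsProjCover f)
    (e : A ≃ₗ[Λ] B) : IsProjCover (f ≫ (ModuleCat.ofHom e.toLinearMap : A ⟶ B)) := by
  obtain ⟨hP, hsurj, hess⟩ := hc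
  refine ⟨hP, fun b => ?_, ?_⟩
  · obtain ⟨x, hx⟩ := hsurj (e.symm b)
    exact ⟨x, by show e (f x) = b; rw [hx]; exact e.apply_symm_apply b⟩
  · intro N hN
    apply hess
    rw [Submodule.eq_top_iff']
    intro a
    have hb : e a ∈ Submodule.map (f ≫ (ModuleCat.ofHom e.toLinearMap : A ⟶ B)).hom N :=
      hN ▸ Submodule.mem_top
    obtain ⟨x, hxN, hx⟩ := hb
    have hx' : e (f x) = e a := hx
    have := e.injective hx'
    exact ⟨x, hxN, this⟩

/-- transfer a (positive) syzygy along an isomorphism of the base module -/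
lemma isSyzygy_equiv {n : ℕ} {K A B : ModuleCat.{0} Λ} (e : A ≃ₗ[Λ] B)
    (h : IsSyzygy (n + 1) K A) : IsSyzygy (n + 1) K B := by
  cases h with
  | succ f i hc hi hr h1 =>
    refine IsSyzygy.succ (f ≫ (ModuleCat.ofHom e.toLinearMap : _ ⟶ B)) i (hc.comp_equiv e) hi ?_ h1
    rw [hr]
    apply le_antisymm
    · rintro x hx
      show e (f x) = 0
      rw [(LinearMap.mem_ker).mp hx, map_zero]
    · rintro x hx
      have hx' : e (f x) = 0 := hx
      show f x = 0
      have : e (f x) = e 0 := by rw [hx', map_zero]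
      exact e.injective this

end MainAux2

section MainAux3
variable {Λ : Type} [Ring Λ]
open Stmt5Aux

/-- uniqueness of projective covers: the kernel of any other projective cover of `Q`
is isomorphic to `M`. -/
lemma cover_ker_equiv {M I Q P' K₁ : ModuleCat.{0} Λ}
    (f : M ⟶ I) (hfinj : Function.Injective f)
    (p : I ⟶ Q) (hcov : IsProjCover p)
    (hker : LinearMap.ker p.hom = LinearMap.range f.hom)
    (f' : P' ⟶ Q) (hc' : IsProjCover f')
    (i' : K₁ ⟶ P') (hi' : Function.Injective i')
    (hr' : LinearMap.range i'.hom = LinearMap.ker f'.hom) :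
    Nonempty (K₁ ≃ₗ[Λ] M) := by
  haveI := hcov.1
  haveI := hc'.1
  haveI : Epi p := (ModuleCat.epi_iff_surjective p).mpr hcov.2.1
  let φ : P' ⟶ I := Projective.factorThru f' p
  have hφc : φ ≫ p = f' := Projective.factorThru_comp f' p
  have hφsurj : Function.Surjective φ := by
    have hmap : Submodule.map p.hom (LinearMap.range φ.hom) = ⊤ := by
      rw [← LinearMap.range_comp]
      have hcomp : p.hom ∘ₗ φ.hom = f'.hom := congrArg ModuleCat.Hom.hom hφc
      rw [hcomp]
      exact LinearMap.range_eq_top.mpr hc'.2.1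
    exact LinearMap.range_eq_top.mp (hcov.2.2 _ hmap)
  haveI : Epi φ := (ModuleCat.epi_iff_surjective φ).mpr hφsurj
  let s : I ⟶ P' := Projective.factorThru (𝟙 I) φ
  have hsφ : s ≫ φ = 𝟙 I := Projective.factorThru_comp _ _
  have hssurj : Function.Surjective s := by
    have hsf : s ≫ f' = p := by
      rw [← hφc, ← Category.assoc, hsφ, Category.id_comp]
    have hmap : Submodule.map f'.hom (LinearMap.range s.hom) = ⊤ := by
      rw [← LinearMap.range_comp]
      have hcomp : f'.hom ∘ₗ s.hom = p.hom := congrArg ModuleCat.Hom.hom hsf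
      rw [hcomp]
      exact LinearMap.range_eq_top.mpr hcov.2.1
    exact LinearMap.range_eq_top.mp (hc'.2.2 _ hmap)
  have hφinj : Function.Injective φ := by
    intro x y hxy
    obtain ⟨a, rfl⟩ := hssurj x
    obtain ⟨b, rfl⟩ := hssurj y
    have ha : φ (s a) = a := ConcreteCategory.congr_hom hsφ a
    have hb : φ (s b) = b := ConcreteCategory.congr_hom hsφ b
    rw [ha, hb] at hxy
    rw [hxy]
  let j : K₁ →ₗ[Λ] I := φ.hom ∘ₗ i'.hom
  have hjinj : Function.Injective j := hφinj.comp hi'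
  have hjr : LinearMap.range j = LinearMap.range f.hom := by
    rw [← hker]
    apply le_antisymm
    · rintro x ⟨a, rfl⟩
      show p (φ (i' a)) = 0
      have h1 : i' a ∈ LinearMap.ker f'.hom := hr' ▸ LinearMap.mem_range_self _ a
      have hpφ : p (φ (i' a)) = f' (i' a) := ConcreteCategory.congr_hom hφc (i' a)
      rw [hpφ]
      exact h1
    · rintro y hy
      obtain ⟨x, rfl⟩ := hφsurj y
      have h2 : x ∈ LinearMap.ker f'.hom := by
        have hpφ : p (φ x) = f' x := ConcreteCategory.congr_hom hφc x
        rw [LinearMap.mem_ker, ← hpφ]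
        exact hy
      rw [← hr'] at h2
      obtain ⟨a, rfl⟩ := h2
      exact ⟨a, rfl⟩
  have hmem : ∀ x : K₁, j x ∈ LinearMap.range f.hom := fun x =>
    hjr ▸ LinearMap.mem_range_self j x
  let fe := LinearEquiv.ofInjective f.hom hfinj
  let ψ : K₁ →ₗ[Λ] M :=
    fe.symm.toLinearMap ∘ₗ (j.codRestrict (LinearMap.range f.hom) hmem)
  have hfψ : ∀ x, f (ψ x) = j x := by
    intro x
    have h3 : (fe (ψ x) : I) = f (ψ x) := LinearEquiv.ofInjective_apply _ _
    rw [← h3]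
    show (fe (fe.symm ⟨j x, hmem x⟩) : I) = j x
    rw [fe.apply_symm_apply]
  have hψinj : Function.Injective ψ := by
    intro a b hab
    apply hjinj
    rw [← hfψ a, ← hfψ b, hab]
  have hψsurj : Function.Surjective ψ := by
    intro m
    have : f m ∈ LinearMap.range j := by
      rw [hjr]
      exact LinearMap.mem_range_self _ m
    obtain ⟨x, hx⟩ := this
    exact ⟨x, hfinj (by rw [hfψ x, hx])⟩
  exact ⟨LinearEquiv.ofBijective ψ ⟨hψinj, hψsurj⟩⟩

end MainAux3


/-- if `M` is indecomposable non-injective and its injective envelope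
`I` is projective, then `I ⟶ I/M` is a projective cover, appending it to a minimal
projective resolution of `M` gives a minimal projective resolution of `I/M`, and
`pd (I/M) = pd M + 1`. -/
theorem stmt5 (Λ : Type) [Ring Λ] [IsArtinianRing Λ]
    (M I Q : ModuleCat.{0} Λ)
    (hMf : Module.Finite Λ M) (hM : Indec M) (hMni : ¬ Injective M)
    (f : M ⟶ I) (hf : IsInjEnv f) (hIproj : Projective I)
    (p : I ⟶ Q) (hp : Function.Surjective p)
    (hker : LinearMap.ker p.hom = LinearMap.range f.hom) :
    IsProjCover p ∧ (∀ (n : ℕ) (K : ModuleCat.{0} Λ),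
      IsSyzygy n K M → IsSyzygy (n + 1) K Q) ∧
    ∀ n : ℕ, PdEq M n → PdEq Q (n + 1) := by
  have hfinj : Function.Injective f := hf.2.1
  have hcov : IsProjCover p := stmt5_isProjCover M I Q hMf hM hMni f hf hIproj p hp hker
  have happend : ∀ (n : ℕ) (K : ModuleCat.{0} Λ), IsSyzygy n K M → IsSyzygy (n + 1) K Q :=
    fun n K hs => IsSyzygy.succ p f hcov hfinj hker.symm hs
  refine ⟨hcov, happend, ?_⟩
  rintro n ⟨⟨K, hsK, hKproj⟩, hmin⟩
  constructor
  · exact ⟨K, happend n K hsK, hKproj⟩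
  · intro m hm
    obtain ⟨K', hs', hK'⟩ := hm
    haveI : Epi p := (ModuleCat.epi_iff_surjective p).mpr hp
    cases hs' with
    | zero =>
      -- m = 0 : Q would be projective, so p splits, forcing M = 0; contradiction
      exfalso
      haveI := hK'
      let s : Q ⟶ I := Projective.factorThru (𝟙 Q) p
      have hsp : s ≫ p = 𝟙 Q := Projective.factorThru_comp _ _
      have hmap : Submodule.map p.hom (LinearMap.range s.hom) = ⊤ := by
        rw [Submodule.eq_top_iff']
        intro q
        exact ⟨s q, LinearMap.mem_range_self _ q, ConcreteCategory.congr_hom hsp q⟩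
      have hrs : LinearMap.range s.hom = ⊤ := hcov.2.2 _ hmap
      have hpinj : ∀ x : I, p x = 0 → x = 0 := by
        intro x hx
        have hxs : x ∈ LinearMap.range s.hom := hrs ▸ Submodule.mem_top
        obtain ⟨q, rfl⟩ := hxs
        have : p (s q) = q := ConcreteCategory.congr_hom hsp q
        rw [hx] at this
        rw [← this, map_zero]
      haveI := hM.1
      obtain ⟨m0, hm0⟩ := exists_ne (0 : M)
      apply hm0
      apply hfinj
      rw [map_zero]
      apply hpinj
      have : f m0 ∈ LinearMap.ker p.hom := by
        rw [hker]
        exact LinearMap.mem_range_self _ m0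
      exact this
    | succ f' i' hc' hi' hr' hs'' =>
      rename_i m' K₁ P'
      obtain ⟨e⟩ := cover_ker_equiv f hfinj p hcov hker f' hc' i' hi' hr'
      have hPd : PdLE M m' := by
        cases hs'' with
        | zero => exact ⟨M, IsSyzygy.zero M, Projective.of_iso (equivIso e) hK'⟩
        | succ f'' i'' hcc hii hrr hsss =>
          exact ⟨K', isSyzygy_equiv e (IsSyzygy.succ f'' i'' hcc hii hrr hsss), hK'⟩
      exact Nat.succ_le_succ (hmin m' hPd)
end
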